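/- arXiv:0810.0280 — 5 statements merged into one kernel-verified Lean document; each statement's English description precedes it below -/
import Mathlib

section
/- Let (X, μ) be a measure space, n ≥ 1, and let f_0, …, f_{n−1}, g_0, …, g_{n−1} : X → ℝ be measurable functions such that every product f_i · g_j is μ-integrable. Then ∫_{X^n} det( f_i(λ_{j+1}) )_{0≤i,j≤n−1} · det( g_i(λ_{j+1}) )_{0≤i,j≤n−1} dμ(λ_1)⋯dμ(λ_n) = n! · det( ∫_X f_i(x) g_j(x) dμ(x) )_{0≤i,j≤n−1} (de Bruijn's / Andréief's integration formula). -/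
open MeasureTheory

lemma andreief_aux {n : ℕ} (A : Matrix (Fin n) (Fin n) ℝ) :
    ∑ σ : Equiv.Perm (Fin n), ∑ τ : Equiv.Perm (Fin n),
      ((Equiv.Perm.sign σ : ℤ) : ℝ) * ((Equiv.Perm.sign τ : ℤ) : ℝ) *
        ∏ j, A (σ j) (τ j)
    = (n.factorial : ℝ) * A.det := by
  have key : ∀ σ : Equiv.Perm (Fin n),
      ∑ τ : Equiv.Perm (Fin n),
        ((Equiv.Perm.sign σ : ℤ) : ℝ) * ((Equiv.Perm.sign τ : ℤ) : ℝ) *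
          ∏ j, A (σ j) (τ j) = A.det := by
    intro σ
    rw [← Equiv.sum_comp (Equiv.mulRight σ)
      (fun τ => ((Equiv.Perm.sign σ : ℤ) : ℝ) * ((Equiv.Perm.sign τ : ℤ) : ℝ) *
        ∏ j, A (σ j) (τ j))]
    have : ∀ π : Equiv.Perm (Fin n),
        ((Equiv.Perm.sign σ : ℤ) : ℝ) *
          ((Equiv.Perm.sign (Equiv.mulRight σ π) : ℤ) : ℝ) *
          ∏ j, A (σ j) ((Equiv.mulRight σ π) j)
        = ((Equiv.Perm.sign π : ℤ) : ℝ) * ∏ k, A k (π k) := by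
      intro π
      have hms : Equiv.mulRight σ π = π * σ := rfl
      have h1 : ∏ j, A (σ j) ((Equiv.mulRight σ π) j) = ∏ k, A k (π k) := by
        rw [hms, ← Equiv.prod_comp σ (fun k => A k (π k))]
        simp [Equiv.Perm.mul_apply]
      rw [h1]
      have h2 : ((Equiv.Perm.sign σ : ℤ) : ℝ) *
          ((Equiv.Perm.sign (Equiv.mulRight σ π) : ℤ) : ℝ)
          = ((Equiv.Perm.sign π : ℤ) : ℝ) := by
        rw [hms, map_mul]
        rcases Int.units_eq_one_or (Equiv.Perm.sign σ) with h | h <;>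
          rcases Int.units_eq_one_or (Equiv.Perm.sign π) with h' | h' <;>
          simp [h, h']
      rw [h2]
    simp_rw [this]
    rw [← Matrix.det_transpose A, Matrix.det_apply']
    rfl
  simp_rw [key, Finset.sum_const]
  simp [Fintype.card_perm]

/-- **de Bruijn's / Andréief's integration formula.**
Let `(X, μ)` be a (σ-finite) measure space, `n ≥ 1`, and let
`f₀, …, f_{n-1}, g₀, …, g_{n-1} : X → ℝ` be measurable functions such that every
product `fᵢ · gⱼ` is `μ`-integrable.  Then
`∫_{Xⁿ} det(fᵢ(λⱼ)) det(gᵢ(λⱼ)) dμⁿ(λ) = n! · det(∫ fᵢ gⱼ dμ)`. -/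
theorem andreief_integration_formula
    {X : Type*} [MeasurableSpace X] (μ : Measure X) [SigmaFinite μ]
    (n : ℕ) (hn : 1 ≤ n)
    (f g : Fin n → X → ℝ)
    (hf : ∀ i, Measurable (f i)) (hg : ∀ i, Measurable (g i))
    (hfg : ∀ i j, Integrable (fun x => f i x * g j x) μ) :
    ∫ lam : Fin n → X,
        (Matrix.det (Matrix.of fun i j : Fin n => f i (lam j))) *
          (Matrix.det (Matrix.of fun i j : Fin n => g i (lam j)))
        ∂(Measure.pi fun _ : Fin n => μ)
      = (n.factorial : ℝ) *
          Matrix.det (Matrix.of fun i j : Fin n => ∫ x, f i x * g j x ∂μ) := by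
  letI : MeasureSpace X := ⟨μ⟩
  have hμ : μ = (volume : Measure X) := rfl
  have h1 : ∀ lam : Fin n → X,
      (Matrix.det (Matrix.of fun i j : Fin n => f i (lam j))) *
        (Matrix.det (Matrix.of fun i j : Fin n => g i (lam j)))
      = ∑ σ : Equiv.Perm (Fin n), ∑ τ : Equiv.Perm (Fin n),
          ((Equiv.Perm.sign σ : ℤ) : ℝ) * ((Equiv.Perm.sign τ : ℤ) : ℝ) *
            ∏ j, (f (σ j) (lam j) * g (τ j) (lam j)) := by
    intro lam
    rw [Matrix.det_apply', Matrix.det_apply', Finset.sum_mul_sum]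
    refine Finset.sum_congr rfl fun σ _ => Finset.sum_congr rfl fun τ _ => ?_
    rw [Finset.prod_mul_distrib]
    simp only [Matrix.of_apply]
    ring
  simp_rw [h1]
  have hint : ∀ σ τ : Equiv.Perm (Fin n),
      Integrable (fun lam : Fin n → X =>
        ∏ j, (f (σ j) (lam j) * g (τ j) (lam j)))
        (Measure.pi fun _ : Fin n => μ) := by
    intro σ τ
    rw [hμ, ← volume_pi]
    exact Integrable.fintype_prod (f := fun j x => f (σ j) x * g (τ j) x)
      (fun j => hfg (σ j) (τ j))
  rw [integral_finset_sum]
  · have h2 : ∀ σ τ : Equiv.Perm (Fin n),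
        ∫ lam : Fin n → X, ∏ j, (f (σ j) (lam j) * g (τ j) (lam j))
          ∂(Measure.pi fun _ : Fin n => μ)
        = ∏ j, ∫ x, f (σ j) x * g (τ j) x ∂μ := by
      intro σ τ
      rw [hμ, ← volume_pi]
      exact integral_fintype_prod_eq_prod (fun j x => f (σ j) x * g (τ j) x)
    calc ∑ σ : Equiv.Perm (Fin n),
          ∫ lam : Fin n → X, ∑ τ : Equiv.Perm (Fin n),
            ((Equiv.Perm.sign σ : ℤ) : ℝ) * ((Equiv.Perm.sign τ : ℤ) : ℝ) *
              ∏ j, (f (σ j) (lam j) * g (τ j) (lam j))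
            ∂(Measure.pi fun _ : Fin n => μ)
        = ∑ σ : Equiv.Perm (Fin n), ∑ τ : Equiv.Perm (Fin n),
            ((Equiv.Perm.sign σ : ℤ) : ℝ) * ((Equiv.Perm.sign τ : ℤ) : ℝ) *
              ∏ j, ∫ x, f (σ j) x * g (τ j) x ∂μ := by
          refine Finset.sum_congr rfl fun σ _ => ?_
          rw [integral_finset_sum]
          · refine Finset.sum_congr rfl fun τ _ => ?_
            rw [integral_const_mul, h2]
          · exact fun τ _ => ((hint σ τ).const_mul _)
      _ = (n.factorial : ℝ) *
          Matrix.det (Matrix.of fun i j : Fin n => ∫ x, f i x * g j x ∂μ) :=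
          andreief_aux (Matrix.of fun i j : Fin n => ∫ x, f i x * g j x ∂μ)
  · intro σ _
    exact integrable_finset_sum _ (fun τ _ => ((hint σ τ).const_mul _))
end

section
/- Let α and β be partitions and let i be an integer such that the partitions α−i and β+i are both well defined. Then for every integer n one has the identity (n)_{α−i} · (n)_{β+i} = n · (n+1)_α · (n−1)_β of generalized Pochhammer symbols (indeed this holds as a polynomial identity in n). -/
/-- The multiset of factors `x, x+1, …, x+c-1`. -/
def row (x : ℤ) (c : ℕ) : Multiset ℤ := (Multiset.range c).map (fun t : ℕ => x + (t : ℤ))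

lemma row_zero (x : ℤ) : row x 0 = 0 := rfl

lemma row_succ_top (x : ℤ) (c : ℕ) : row x (c + 1) = (x + c) ::ₘ row x c := by
  simp [row, Multiset.range_succ]

lemma row_congr {x y : ℤ} (h : x = y) (c : ℕ) : row x c = row y c := by rw [h]

lemma row_add (x : ℤ) (a b : ℕ) : row x (a + b) = row x a + row (x + a) b := by
  induction b with
  | zero => simp [row_zero]
  | succ b ih =>
      rw [show a + (b + 1) = (a + b) + 1 by ring, row_succ_top, ih, row_succ_top]
      push_cast
      rw [show x + (↑a + ↑b) = x + ↑a + ↑b by ring]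
      exact (Multiset.cons_add _ _ _).symm ▸ by
        rw [← Multiset.singleton_add, ← Multiset.singleton_add]; ring_nf; abel

lemma row_one (x : ℤ) : row x 1 = {x} := by
  simp [row, Multiset.range_succ]

lemma row_succ_bot (x : ℤ) (c : ℕ) : row x (c + 1) = x ::ₘ row (x + 1) c := by
  rw [show c + 1 = 1 + c by ring, row_add, row_one]
  simp [Multiset.singleton_add]

lemma prod_row (x : ℤ) (c : ℕ) :
    (row x c).prod = ∏ t ∈ Finset.range c, (x + (t : ℤ)) := by
  rw [row, ← Finset.range_val, ← Finset.prod_eq_multiset_prod]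

lemma singsum (x : ℤ) (k : ℕ) :
    (∑ j ∈ Finset.range k, ({(x - (j : ℤ))} : Multiset ℤ)) = row (x + 1 - k) k := by
  induction k with
  | zero => simp [row_zero]
  | succ k ih =>
      rw [Finset.sum_range_succ, ih]
      rw [show ((k+1 : ℕ) : ℤ) = (k : ℤ) + 1 by push_cast; ring,
        show x + 1 - ((k : ℤ) + 1) = x - k by ring]
      rw [row_succ_bot, show x - (k:ℤ) + 1 = x + 1 - k by ring, ← Multiset.singleton_add]
      push_cast
      abel

/-- The generalized Pochhammer symbol `(n)_κ = ∏_{i≥0} ∏_{j=1}^{κ_i} (n - i + j - 1)`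
of a partition (given by its sequence of parts `κ : ℕ → ℕ`). -/
noncomputable def gpoch (κ : ℕ → ℕ) (n : ℤ) : ℤ :=
  ∏ᶠ i : ℕ, ∏ j ∈ Finset.Icc 1 (κ i), (n - (i : ℤ) + (j : ℤ) - 1)

/-- The parts of the partition `α - i` where `i = a_{-k} = α_k - k + 1`:
namely `(α₀+1, …, α_{k-1}+1, α_{k+1}, α_{k+2}, …)`. -/
def subParts (α : ℕ → ℕ) (k : ℕ) : ℕ → ℕ :=
  fun j => if j < k then α j + 1 else α (j + 1)

/-- The parts of the partition `β + i`, where `i` is inserted at position `m`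
(so `m = 0` corresponds to the case `i > b₀` and the result `(i, β₀, β₁, …)`,
and `m = l + 1` to the case `b_{-l} > i > b_{-l-1}` and the result
`(β₀-1, …, β_l-1, i+l+1, β_{l+1}, …)`). -/
def addParts (β : ℕ → ℕ) (i : ℤ) (m : ℕ) : ℕ → ℕ :=
  fun j => if j < m then β j - 1 else if j = m then (i + m).toNat else β (j - 1)


lemma icc_eq_row (x : ℤ) (c : ℕ) :
    ∏ j ∈ Finset.Icc 1 c, (x + (j : ℤ) - 1) = (row x c).prod := by
  rw [prod_row, show Finset.Icc 1 c = Finset.Ico 1 (c + 1) by rw [Finset.Ico_add_one_right_eq_Icc],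
    Finset.prod_Ico_eq_prod_range]
  simp only [Nat.add_sub_cancel]
  apply Finset.prod_congr rfl
  intro t _
  push_cast
  ring

lemma gpoch_eq (κ : ℕ → ℕ) (N : ℕ) (h : ∀ j, N ≤ j → κ j = 0) (x : ℤ) :
    gpoch κ x = (∑ j ∈ Finset.range N, row (x - j) (κ j)).prod := by
  rw [gpoch, Multiset.prod_sum]
  have hsupp : (Function.mulSupport fun i : ℕ =>
      ∏ j ∈ Finset.Icc 1 (κ i), (x - (i : ℤ) + (j : ℤ) - 1)) ⊆ ↑(Finset.range N) := by
    intro j hj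
    simp only [Function.mem_mulSupport] at hj
    by_contra hjn
    simp only [Finset.coe_range, Set.mem_Iio, not_lt] at hjn
    rw [h j hjn] at hj
    simp at hj
  rw [finprod_eq_prod_of_mulSupport_subset _ hsupp]
  apply Finset.prod_congr rfl
  intro j _
  rw [← icc_eq_row]

lemma claimI (α : ℕ → ℕ) (k N : ℕ) (hkN : k ≤ N) (n : ℤ) :
    (∑ j ∈ Finset.range N, row (n - j) (subParts α k j)) + row (n + 1 - k) (α k)
      = row (n + 1 - k) k + ∑ j ∈ Finset.range (N + 1), row (n + 1 - j) (α j) := by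
  have h1 : ∑ j ∈ Finset.range N, row (n - j) (subParts α k j)
      = (∑ j ∈ Finset.range k, row (n - j) (subParts α k j))
        + ∑ j ∈ Finset.Ico k N, row (n - j) (subParts α k j) :=
    (Finset.sum_range_add_sum_Ico _ hkN).symm
  have h2 : ∑ j ∈ Finset.range k, row (n - j) (subParts α k j)
      = row (n + 1 - k) k + ∑ j ∈ Finset.range k, row (n + 1 - j) (α j) := by
    have hc : ∀ j ∈ Finset.range k, row (n - j) (subParts α k j)
        = ({(n - (j : ℤ))} : Multiset ℤ) + row (n + 1 - j) (α j) := by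
      intro j hj
      rw [Finset.mem_range] at hj
      simp only [subParts, if_pos hj]
      rw [row_succ_bot, ← Multiset.singleton_add,
        row_congr (show n - (j : ℤ) + 1 = n + 1 - j by ring)]
    rw [Finset.sum_congr rfl hc, Finset.sum_add_distrib, singsum]
  have h3 : ∑ j ∈ Finset.Ico k N, row (n - j) (subParts α k j)
      = ∑ t ∈ Finset.range (N - k), row (n - (k + t : ℕ)) (α (k + t + 1)) := by
    rw [Finset.sum_Ico_eq_sum_range]
    apply Finset.sum_congr rfl
    intro t _
    simp only [subParts, if_neg (by omega : ¬ (k + t < k))]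
  have h4 : ∑ j ∈ Finset.range (N + 1), row (n + 1 - j) (α j)
      = (∑ j ∈ Finset.range k, row (n + 1 - j) (α j)) + row (n + 1 - k) (α k)
        + ∑ t ∈ Finset.range (N - k), row (n - (k + t : ℕ)) (α (k + t + 1)) := by
    rw [← Finset.sum_range_add_sum_Ico _ (show k ≤ N + 1 by omega),
      Finset.sum_eq_sum_Ico_succ_bot (show k < N + 1 by omega),
      Finset.sum_Ico_eq_sum_range]
    have hr : N + 1 - (k + 1) = N - k := by omega
    rw [hr]
    have hc : ∀ t ∈ Finset.range (N - k), row (n + 1 - (k + 1 + t : ℕ)) (α (k + 1 + t))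
        = row (n - (k + t : ℕ)) (α (k + t + 1)) := by
      intro t _
      rw [show k + 1 + t = k + t + 1 by omega,
        row_congr (show n + 1 - ((k + t + 1 : ℕ) : ℤ) = n - (k + t : ℕ) by push_cast; ring)]
    rw [Finset.sum_congr rfl hc]
    abel
  rw [h1, h2, h3, h4]
  abel

lemma claimII (β : ℕ → ℕ) (i : ℤ) (m N : ℕ) (hmN : m ≤ N)
    (hβ1 : ∀ j, j < m → 1 ≤ β j) (n : ℤ) :
    (∑ j ∈ Finset.range (N + 1), row (n - j) (addParts β i m j)) + row (n - m) m
      = (∑ j ∈ Finset.range N, row (n - 1 - j) (β j)) + row (n - m) ((i + m).toNat) := by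
  have h1 : ∑ j ∈ Finset.range (N + 1), row (n - j) (addParts β i m j)
      = (∑ j ∈ Finset.range m, row (n - j) (addParts β i m j))
        + (row (n - m) ((i + m).toNat)
          + ∑ j ∈ Finset.Ico (m + 1) (N + 1), row (n - j) (addParts β i m j)) := by
    rw [← Finset.sum_range_add_sum_Ico _ (show m ≤ N + 1 by omega),
      Finset.sum_eq_sum_Ico_succ_bot (show m < N + 1 by omega)]
    congr 2
    simp [addParts]
  have h2 : (∑ j ∈ Finset.range m, row (n - j) (addParts β i m j)) + row (n - m) m
      = ∑ j ∈ Finset.range m, row (n - 1 - j) (β j) := by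
    have hc : ∀ j ∈ Finset.range m, row (n - 1 - j) (β j)
        = ({(n - 1 - (j : ℤ))} : Multiset ℤ) + row (n - j) (addParts β i m j) := by
      intro j hj
      rw [Finset.mem_range] at hj
      have h1j : 1 ≤ β j := hβ1 j hj
      simp only [addParts, if_pos hj]
      rw [Multiset.singleton_add,
        show (n : ℤ) - (j : ℤ) = n - 1 - (j : ℤ) + 1 by ring, ← row_succ_bot]
      congr 1
      omega
    rw [Finset.sum_congr rfl hc, Finset.sum_add_distrib]
    have hs : ∑ j ∈ Finset.range m, ({(n - 1 - (j : ℤ))} : Multiset ℤ) = row (n - m) m := by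
      have := singsum (n - 1) m
      rw [row_congr (show n - 1 + 1 - (m : ℤ) = n - m by ring)] at this
      rw [← this]
    rw [hs]
    abel
  have h3 : ∑ j ∈ Finset.Ico (m + 1) (N + 1), row (n - j) (addParts β i m j)
      = ∑ j ∈ Finset.Ico m N, row (n - 1 - j) (β j) := by
    rw [Finset.sum_Ico_eq_sum_range, Finset.sum_Ico_eq_sum_range]
    rw [show N + 1 - (m + 1) = N - m by omega]
    apply Finset.sum_congr rfl
    intro t _
    simp only [addParts, if_neg (by omega : ¬ (m + 1 + t < m)),
      if_neg (by omega : ¬ (m + 1 + t = m))]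
    rw [show m + 1 + t - 1 = m + t by omega,
      row_congr (show n - ((m + 1 + t : ℕ) : ℤ) = n - 1 - ((m + t : ℕ) : ℤ) by push_cast; ring)]
  have h4 : ∑ j ∈ Finset.range N, row (n - 1 - j) (β j)
      = (∑ j ∈ Finset.range m, row (n - 1 - j) (β j))
        + ∑ j ∈ Finset.Ico m N, row (n - 1 - j) (β j) :=
    (Finset.sum_range_add_sum_Ico _ hmN).symm
  rw [h1, h3, h4, ← h2]
  abel

lemma claimIII (n : ℤ) (a p k m : ℕ) (h : a + m + 1 = p + k) :
    row (n + 1 - k) k + row (n - m) p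
      = {n} + row (n + 1 - k) a + row (n - m) m := by
  rcases le_or_gt k a with hka | hka
  · obtain ⟨d, rfl⟩ : ∃ d, a = k + d := ⟨a - k, by omega⟩
    obtain ⟨rfl⟩ : p = m + (1 + d) := by omega
    rw [row_add (n + 1 - k) k d, row_add (n - m) m (1 + d), row_add (n - m + m) 1 d,
      row_congr (show n + 1 - (k : ℤ) + (k : ℤ) = n - m + m + 1 + ((1 : ℕ) : ℤ) - 1 by
        push_cast; ring) d,
      row_one, show (n : ℤ) - m + m = n by ring]
    abel
  · obtain ⟨e, rfl⟩ : ∃ e, k = a + (1 + e) := ⟨k - a - 1, by omega⟩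
    obtain ⟨rfl⟩ : m = p + e := by omega
    rw [row_add (n + 1 - (a + (1 + e) : ℕ)) a (1 + e),
      show (1 : ℕ) + e = e + 1 by omega,
      row_add (n + 1 - (a + (e + 1) : ℕ) + a) e 1,
      row_add (n - (p + e : ℕ)) p e,
      row_congr (show n + 1 - ((a + (e + 1) : ℕ) : ℤ) + (a : ℤ) = n - ((p + e : ℕ) : ℤ) + (p : ℤ)
        by push_cast; ring) e,
      row_congr (show n + 1 - ((a + (e + 1) : ℕ) : ℤ) + (a : ℤ) + (e : ℤ) = n by
        push_cast; ring) 1,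
      row_one]
    abel

/-- For partitions `α`, `β` and an integer `i` such that `α - i` and `β + i` are both
well defined, `(n)_{α-i} · (n)_{β+i} = n · (n+1)_α · (n-1)_β` for every integer `n`. -/
theorem gpoch_subParts_mul_gpoch_addParts
    (α β : ℕ → ℕ)
    (hα : Antitone α) (hα0 : ∃ N, ∀ j, N ≤ j → α j = 0)
    (hβ : Antitone β) (hβ0 : ∃ N, ∀ j, N ≤ j → β j = 0)
    (i : ℤ)
    -- `α - i` is well defined: `i = a_{-k} = α_k - k + 1`
    (k : ℕ) (hk : i = (α k : ℤ) - k + 1)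
    -- `β + i` is well defined, with insertion position `m`:
    -- `b_{-j} > i` for `j < m` and `i > b_{-j}` for `j ≥ m`, where `b_{-j} = β_j - j - 1`
    (m : ℕ) (hm₁ : ∀ j : ℕ, j < m → (β j : ℤ) - j - 1 > i)
    (hm₂ : ∀ j : ℕ, m ≤ j → i > (β j : ℤ) - j - 1)
    (n : ℤ) :
    gpoch (subParts α k) n * gpoch (addParts β i m) n
      = n * gpoch α (n + 1) * gpoch β (n - 1) := by
  obtain ⟨Nα, hNα⟩ := hα0
  obtain ⟨Nβ, hNβ⟩ := hβ0
  set N := Nα + Nβ + k + m with hN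
  have hkN : k ≤ N := by omega
  have hmN : m ≤ N := by omega
  have hbm : (0 : ℤ) ≤ (β m : ℤ) := Int.natCast_nonneg _
  have him : -(m : ℤ) ≤ i := by have := hm₂ m le_rfl; omega
  have hp : (((i + m).toNat : ℕ) : ℤ) = i + m := Int.toNat_of_nonneg (by omega)
  have hβ1 : ∀ j, j < m → 1 ≤ β j := by
    intro j hj
    have h2 := hm₁ (m - 1) (by omega)
    have h3 : 1 ≤ β (m - 1) := by omega
    have h4 := hβ (show j ≤ m - 1 by omega)
    omega
  have g1 := gpoch_eq (subParts α k) N (fun j hj => by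
      simp only [subParts, if_neg (show ¬ j < k by omega)]
      exact hNα _ (by omega)) n
  have g2 := gpoch_eq (addParts β i m) (N + 1) (fun j hj => by
      simp only [addParts, if_neg (show ¬ j < m by omega), if_neg (show ¬ j = m by omega)]
      exact hNβ _ (by omega)) n
  have g3 := gpoch_eq α (N + 1) (fun j hj => hNα j (by omega)) (n + 1)
  have g4 := gpoch_eq β N (fun j hj => hNβ j (by omega)) (n - 1)
  have hnat : α k + m + 1 = (i + m).toNat + k := by omega
  have c1 := claimI α k N hkN n
  have c2 := claimII β i m N hmN hβ1 n
  have c3 := claimIII n (α k) ((i + m).toNat) k m hnat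
  have key : (∑ j ∈ Finset.range N, row (n - j) (subParts α k j))
      + (∑ j ∈ Finset.range (N + 1), row (n - j) (addParts β i m j))
      = ({n} + (∑ j ∈ Finset.range (N + 1), row (n + 1 - j) (α j)))
        + (∑ j ∈ Finset.range N, row (n - 1 - j) (β j)) := by
    have H : ((∑ j ∈ Finset.range N, row (n - j) (subParts α k j))
        + (∑ j ∈ Finset.range (N + 1), row (n - j) (addParts β i m j)))
        + (row (n + 1 - k) (α k) + row (n - m) m)
        = (({n} + (∑ j ∈ Finset.range (N + 1), row (n + 1 - j) (α j)))
          + (∑ j ∈ Finset.range N, row (n - 1 - j) (β j)))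
        + (row (n + 1 - k) (α k) + row (n - m) m) := by
      calc ((∑ j ∈ Finset.range N, row (n - j) (subParts α k j))
          + (∑ j ∈ Finset.range (N + 1), row (n - j) (addParts β i m j)))
          + (row (n + 1 - k) (α k) + row (n - m) m)
          = ((∑ j ∈ Finset.range N, row (n - j) (subParts α k j)) + row (n + 1 - k) (α k))
            + ((∑ j ∈ Finset.range (N + 1), row (n - j) (addParts β i m j))
              + row (n - m) m) := by abel
        _ = (row (n + 1 - k) k + ∑ j ∈ Finset.range (N + 1), row (n + 1 - j) (α j))
            + ((∑ j ∈ Finset.range N, row (n - 1 - j) (β j))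
              + row (n - m) ((i + m).toNat)) := by rw [c1, c2]
        _ = (row (n + 1 - k) k + row (n - m) ((i + m).toNat))
            + ((∑ j ∈ Finset.range (N + 1), row (n + 1 - j) (α j))
              + (∑ j ∈ Finset.range N, row (n - 1 - j) (β j))) := by abel
        _ = (({n} : Multiset ℤ) + row (n + 1 - k) (α k) + row (n - m) m)
            + ((∑ j ∈ Finset.range (N + 1), row (n + 1 - j) (α j))
              + (∑ j ∈ Finset.range N, row (n - 1 - j) (β j))) := by rw [c3]
        _ = (({n} + (∑ j ∈ Finset.range (N + 1), row (n + 1 - j) (α j)))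
            + (∑ j ∈ Finset.range N, row (n - 1 - j) (β j)))
            + (row (n + 1 - k) (α k) + row (n - m) m) := by abel
    exact add_right_cancel H
  rw [g1, g2, g3, g4, ← Multiset.prod_add, key, Multiset.prod_add, Multiset.prod_add,
    Multiset.prod_singleton, mul_assoc]
end

section
/- Let μ be a positive Borel measure on ℝ with all absolute moments finite, let n ≥ 1, and let κ be a partition with l(κ) ≤ n. Then ∫_{ℝ^n} Δ(λ)² s_κ(λ_1, …, λ_n) dμ(λ_1)⋯dμ(λ_n) = n! · det( G_{(n−i+κ_{i−1}) + (n−j)} )_{1≤i,j≤n}, where G_m = ∫_ℝ x^m dμ(x); i.e., the average of the Schur polynomial against the squared Vandermonde is n! times a determinant of moments. -/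
open MeasureTheory

/-- The length `l(κ)` of a partition given by its parts `κ : ℕ → ℕ`. -/
noncomputable def plen (κ : ℕ → ℕ) : ℕ := sInf {N | κ N = 0}

/-- The Vandermonde product `Δ(λ) = ∏_{i<j} (λ_i - λ_j)`. -/
noncomputable def vandermondeProd {n : ℕ} (lam : Fin n → ℝ) : ℝ :=
  ∏ i : Fin n, ∏ j ∈ Finset.Ioi i, (lam i - lam j)

open Matrix Finset in
/-- The Vandermonde product equals the determinant of the "decreasing powers" matrix. -/
private lemma vand_eq_det {n : ℕ} (lam : Fin n → ℝ) :
    vandermondeProd lam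
      = Matrix.det (Matrix.of fun i j : Fin n => lam j ^ (n - 1 - (i : ℕ))) := by
  have hB : (Matrix.of fun i j : Fin n => lam j ^ (n - 1 - (i : ℕ)))
      = ((Matrix.vandermonde (lam ∘ Fin.rev))ᵀ).submatrix Fin.revPerm Fin.revPerm := by
    ext i j
    simp only [Matrix.of_apply, Matrix.submatrix_apply, Matrix.transpose_apply,
      Matrix.vandermonde_apply, Function.comp_apply, Fin.revPerm_apply, Fin.rev_rev,
      Fin.val_rev]
    congr 1
    omega
  rw [hB, Matrix.det_submatrix_equiv_self, Matrix.det_transpose, Matrix.det_vandermonde]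
  simp only [Function.comp_apply]
  unfold vandermondeProd
  have h1 : (∏ i : Fin n, ∏ j ∈ Ioi i, (lam (Fin.rev j) - lam (Fin.rev i)))
      = ∏ i : Fin n, ∏ j ∈ Iio i, (lam j - lam i) := by
    rw [← Equiv.prod_comp Fin.revPerm
      (fun i => ∏ j ∈ Ioi i, (lam (Fin.rev j) - lam (Fin.rev i)))]
    refine Finset.prod_congr rfl fun i _ => ?_
    simp only [Fin.revPerm_apply, Fin.rev_rev]
    refine Finset.prod_bij' (fun j _ => Fin.rev j) (fun j _ => Fin.rev j) ?_ ?_ ?_ ?_ ?_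
    · intro j hj
      have h1 := i.isLt; have h2 := j.isLt
      simp only [mem_Ioi, mem_Iio, Fin.lt_def, Fin.val_rev] at hj ⊢
      omega
    · intro j hj
      have h1 := i.isLt; have h2 := j.isLt
      simp only [mem_Ioi, mem_Iio, Fin.lt_def, Fin.val_rev] at hj ⊢
      omega
    · intro j _; simp [Fin.rev_rev]
    · intro j _; simp [Fin.rev_rev]
    · intro j _; rfl
  rw [h1]
  exact (Finset.prod_comm' (fun x y => by
    simp only [mem_univ, true_and, and_true, mem_Iio, mem_Ioi])).symm

/-- Core combinatorial identity behind the Andréief (Heine) identity. -/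
private lemma sum_perm_pairs {n : ℕ} (M : Matrix (Fin n) (Fin n) ℝ) :
    ∑ p : Equiv.Perm (Fin n) × Equiv.Perm (Fin n),
        (((Equiv.Perm.sign p.1 : ℤ) * (Equiv.Perm.sign p.2 : ℤ) : ℤ) : ℝ)
          * ∏ j : Fin n, M (p.1 j) (p.2 j)
      = (n.factorial : ℝ) * M.det := by
  rw [Fintype.sum_prod_type_right]
  have key : ∀ τ : Equiv.Perm (Fin n),
      (∑ σ : Equiv.Perm (Fin n),
        (((Equiv.Perm.sign σ : ℤ) * (Equiv.Perm.sign τ : ℤ) : ℤ) : ℝ)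
          * ∏ j : Fin n, M (σ j) (τ j)) = M.det := by
    intro τ
    rw [← Equiv.sum_comp (Equiv.mulRight τ) (fun σ : Equiv.Perm (Fin n) =>
      (((Equiv.Perm.sign σ : ℤ) * (Equiv.Perm.sign τ : ℤ) : ℤ) : ℝ)
        * ∏ j : Fin n, M (σ j) (τ j))]
    rw [Matrix.det_apply]
    refine Finset.sum_congr rfl fun π _ => ?_
    have h1 : ∀ j : Fin n, ((Equiv.mulRight τ) π) j = π (τ j) := fun j => rfl
    have h2 : (∏ j : Fin n, M (((Equiv.mulRight τ) π) j) (τ j))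
        = ∏ j : Fin n, M (π j) j := by
      simp_rw [h1]
      exact Equiv.prod_comp τ fun j => M (π j) j
    rw [h2]
    have h3 : ((Equiv.Perm.sign ((Equiv.mulRight τ) π) : ℤ) * (Equiv.Perm.sign τ : ℤ) : ℤ)
        = (Equiv.Perm.sign π : ℤ) := by
      have : (Equiv.mulRight τ) π = π * τ := rfl
      rw [this, map_mul]
      push_cast
      have h4 : ((Equiv.Perm.sign τ : ℤ) * (Equiv.Perm.sign τ : ℤ) : ℤ) = 1 := by
        rw [← Units.val_mul, Int.units_mul_self, Units.val_one]
      rw [mul_assoc, h4, mul_one]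
    rw [h3, Units.smul_def, zsmul_eq_mul]
  simp_rw [key, Finset.sum_const, Finset.card_univ, Fintype.card_perm, nsmul_eq_mul,
    Fintype.card_fin]

private lemma integral_pi_prod {n : ℕ} (μ : Measure ℝ) [IsFiniteMeasure μ]
    (f : Fin n → ℝ → ℝ) :
    ∫ lam : Fin n → ℝ, ∏ j, f j (lam j) ∂(Measure.pi fun _ => μ)
      = ∏ j, ∫ x, f j x ∂μ := by
  letI : MeasureSpace ℝ := ⟨μ⟩
  haveI : SigmaFinite (volume : Measure ℝ) := inferInstanceAs (SigmaFinite μ)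
  exact MeasureTheory.integral_fin_nat_prod_eq_prod f

private lemma integrable_pi_prod {n : ℕ} (μ : Measure ℝ) [IsFiniteMeasure μ]
    (f : Fin n → ℝ → ℝ) (hf : ∀ j, Integrable (f j) μ) :
    Integrable (fun lam : Fin n → ℝ => ∏ j, f j (lam j)) (Measure.pi fun _ => μ) := by
  letI : MeasureSpace ℝ := ⟨μ⟩
  haveI : SigmaFinite (volume : Measure ℝ) := inferInstanceAs (SigmaFinite μ)
  exact MeasureTheory.Integrable.fin_nat_prod hf

/-- Let `μ` be a positive Borel measure on `ℝ` with all absolute moments finite,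
`n ≥ 1`, and `κ` a partition with `l(κ) ≤ n`.  Let `s_κ` be the Schur polynomial in `n`
variables, characterized by the bialternant formula
`Δ(λ) · s_κ(λ) = det(λ_j^{n-i+κ_{i-1}})_{1≤i,j≤n}`.  Then
`∫_{ℝⁿ} Δ(λ)² s_κ(λ) dμⁿ(λ) = n! · det(G_{(n-i+κ_{i-1})+(n-j)})_{1≤i,j≤n}`,
where `G_m = ∫ x^m dμ`.  (Indices `i, j` below run over `Fin n`, i.e. are 0-based, so
the exponent `n - i + κ_{i-1} - 1` of the bialternant reads `n - 1 - i + κ i`.) -/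
theorem integral_vandermonde_sq_mul_schur_eq_det_moments
    (μ : Measure ℝ)
    (hmom : ∀ m : ℕ, Integrable (fun x : ℝ => |x| ^ m) μ)
    (n : ℕ) (hn : 1 ≤ n)
    (κ : ℕ → ℕ) (hκ : Antitone κ) (hκ0 : ∃ N, ∀ j, N ≤ j → κ j = 0)
    (hκlen : plen κ ≤ n)
    (s : (Fin n → ℝ) → ℝ)
    (hs : ∀ lam : Fin n → ℝ,
      vandermondeProd lam * s lam
        = Matrix.det (Matrix.of fun i j : Fin n => lam j ^ (n - 1 - (i : ℕ) + κ i))) :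
    ∫ lam : Fin n → ℝ, (vandermondeProd lam) ^ 2 * s lam
        ∂(Measure.pi fun _ : Fin n => μ)
      = (n.factorial : ℝ) *
          Matrix.det (Matrix.of fun i j : Fin n =>
            ∫ x : ℝ, x ^ ((n - 1 - (i : ℕ) + κ i) + (n - 1 - (j : ℕ))) ∂μ) := by
  classical
  haveI : IsFiniteMeasure μ := by
    have h1 : Integrable (fun _ : ℝ => (1 : ℝ)) μ := by simpa using hmom 0
    exact (integrable_const_iff.mp h1).resolve_left one_ne_zero
  have hint : ∀ m : ℕ, Integrable (fun x : ℝ => x ^ m) μ := by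
    intro m
    refine (hmom m).mono' ((continuous_pow m).aestronglyMeasurable)
      (Filter.Eventually.of_forall fun x => ?_)
    rw [Real.norm_eq_abs, abs_pow]
  -- exponents
  set a : Fin n → ℕ := fun i => n - 1 - (i : ℕ) + κ i with ha
  set b : Fin n → ℕ := fun j => n - 1 - (j : ℕ) with hb
  -- pointwise expansion of the integrand
  have hpt : ∀ lam : Fin n → ℝ,
      (∑ p : Equiv.Perm (Fin n) × Equiv.Perm (Fin n),
            (((Equiv.Perm.sign p.1 : ℤ) * (Equiv.Perm.sign p.2 : ℤ) : ℤ) : ℝ)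
              * ∏ j : Fin n, lam j ^ (a (p.1 j) + b (p.2 j)))
        = (vandermondeProd lam) ^ 2 * s lam := by
    intro lam
    have hBA : (vandermondeProd lam) ^ 2 * s lam
        = Matrix.det (Matrix.of fun i j : Fin n => lam j ^ (a i))
            * Matrix.det (Matrix.of fun i j : Fin n => lam j ^ (b i)) := by
      rw [pow_two, mul_assoc, hs lam, ← vand_eq_det, mul_comm]
    rw [Fintype.sum_prod_type, hBA, Matrix.det_apply, Matrix.det_apply,
      Finset.sum_mul_sum]
    refine Finset.sum_congr rfl fun σ _ => Finset.sum_congr rfl fun τ _ => ?_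
    simp only [Matrix.of_apply, Units.smul_def, zsmul_eq_mul]
    simp_rw [pow_add, Finset.prod_mul_distrib]
    push_cast
    ring
  -- integrability of each summand
  have hterm : ∀ p : Equiv.Perm (Fin n) × Equiv.Perm (Fin n),
      Integrable (fun lam : Fin n → ℝ =>
          (((Equiv.Perm.sign p.1 : ℤ) * (Equiv.Perm.sign p.2 : ℤ) : ℤ) : ℝ)
            * ∏ j : Fin n, lam j ^ (a (p.1 j) + b (p.2 j)))
        (Measure.pi fun _ : Fin n => μ) := by
    intro p
    exact (integrable_pi_prod μ (fun j x => x ^ (a (p.1 j) + b (p.2 j)))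
      (fun j => hint _)).const_mul _
  calc
    ∫ lam : Fin n → ℝ, (vandermondeProd lam) ^ 2 * s lam
        ∂(Measure.pi fun _ : Fin n => μ)
      = ∫ lam : Fin n → ℝ, ∑ p : Equiv.Perm (Fin n) × Equiv.Perm (Fin n),
            (((Equiv.Perm.sign p.1 : ℤ) * (Equiv.Perm.sign p.2 : ℤ) : ℤ) : ℝ)
              * ∏ j : Fin n, lam j ^ (a (p.1 j) + b (p.2 j))
          ∂(Measure.pi fun _ : Fin n => μ) := by
        exact integral_congr_ae (Filter.Eventually.of_forall fun lam => (hpt lam).symm)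
    _ = ∑ p : Equiv.Perm (Fin n) × Equiv.Perm (Fin n),
          (((Equiv.Perm.sign p.1 : ℤ) * (Equiv.Perm.sign p.2 : ℤ) : ℤ) : ℝ)
            * ∏ j : Fin n, ∫ x : ℝ, x ^ (a (p.1 j) + b (p.2 j)) ∂μ := by
        rw [integral_finset_sum _ fun p _ => hterm p]
        refine Finset.sum_congr rfl fun p _ => ?_
        rw [integral_const_mul, integral_pi_prod μ (fun j x => x ^ (a (p.1 j) + b (p.2 j)))]
    _ = (n.factorial : ℝ) *
          Matrix.det (Matrix.of fun i j : Fin n =>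
            ∫ x : ℝ, x ^ (a i + b j) ∂μ) := by
        rw [← sum_perm_pairs (Matrix.of fun i j : Fin n => ∫ x : ℝ, x ^ (a i + b j) ∂μ)]
        rfl
end

section
/- Let R be a commutative ring, n ≥ 1, let M be an (n+1)×n matrix over R with rows indexed 0, 1, …, n, and let N be an (n−1)×n matrix over R. Then Σ_{j=0}^{n} (−1)^j · det( M^{(j)} ) · det( ⟨M_j; N⟩ ) = 0, where M^{(j)} is the n×n matrix obtained from M by deleting row j, M_j is the j-th row of M, and ⟨M_j; N⟩ is the n×n matrix whose first row is M_j and whose remaining n−1 rows are the rows of N. -/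
lemma aux_col_expansion (R : Type*) [CommRing R] (m : ℕ)
    (M : Matrix (Fin (m + 2)) (Fin (m + 1)) R) (k : Fin (m + 1)) :
    ∑ j : Fin (m + 2), (-1 : R) ^ (j : ℕ) * M j k * (M.submatrix j.succAbove id).det = 0 := by
  have h : (Matrix.of (fun i => Fin.cons (M i k) (M i)) :
      Matrix (Fin (m + 2)) (Fin (m + 2)) R).det = 0 := by
    apply Matrix.det_zero_of_column_eq (i := 0) (j := k.succ)
    · exact (Fin.succ_ne_zero k).symm
    · intro i; simp
  rw [Matrix.det_succ_column_zero] at h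
  rw [← h]
  apply Finset.sum_congr rfl
  intro j _
  have h1 : (Matrix.of (fun i => Fin.cons (M i k) (M i)) :
      Matrix (Fin (m + 2)) (Fin (m + 2)) R).submatrix j.succAbove Fin.succ
      = M.submatrix j.succAbove id := by
    ext i l; simp
  rw [h1]
  simp

/-- **Plücker-type relation among maximal minors.**
Let `R` be a commutative ring, `n = m + 1 ≥ 1`, let `M` be an `(n+1) × n` matrix over `R`
and `N` an `(n-1) × n` matrix over `R`.  Then
`Σ_{j=0}^{n} (-1)^j · det(M⁽ʲ⁾) · det(⟨M_j; N⟩) = 0`,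
where `M⁽ʲ⁾` is `M` with row `j` deleted, and `⟨M_j; N⟩` is the `n × n` matrix whose
first row is the `j`-th row of `M` and whose remaining rows are the rows of `N`. -/
theorem alternating_sum_minor_mul_det_cons_eq_zero
    (R : Type*) [CommRing R] (m : ℕ)
    (M : Matrix (Fin (m + 2)) (Fin (m + 1)) R)
    (N : Matrix (Fin m) (Fin (m + 1)) R) :
    ∑ j : Fin (m + 2),
        (-1 : R) ^ (j : ℕ) * (M.submatrix j.succAbove id).det *
          (Matrix.of (Fin.cons (M j) (fun r => N r)) : Matrix (Fin (m + 1)) (Fin (m + 1)) R).det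
      = 0 := by
  have hdet : ∀ j : Fin (m + 2),
      (Matrix.of (Fin.cons (M j) (fun r => N r)) : Matrix (Fin (m + 1)) (Fin (m + 1)) R).det
        = ∑ k : Fin (m + 1), (-1 : R) ^ (k : ℕ) * M j k *
            ((Matrix.of (Fin.cons (M j) (fun r => N r)) :
              Matrix (Fin (m + 1)) (Fin (m + 1)) R).submatrix Fin.succ k.succAbove).det := by
    intro j
    rw [Matrix.det_succ_row_zero]
    simp
  calc ∑ j : Fin (m + 2),
        (-1 : R) ^ (j : ℕ) * (M.submatrix j.succAbove id).det *
          (Matrix.of (Fin.cons (M j) (fun r => N r)) : Matrix (Fin (m + 1)) (Fin (m + 1)) R).det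
      = ∑ k : Fin (m + 1), (-1 : R) ^ (k : ℕ) *
          ((Matrix.of (fun r => N r) : Matrix (Fin m) (Fin (m+1)) R).submatrix id k.succAbove).det *
          ∑ j : Fin (m + 2), (-1 : R) ^ (j : ℕ) * M j k * (M.submatrix j.succAbove id).det := by
        have step : ∀ j : Fin (m + 2),
            (-1 : R) ^ (j : ℕ) * (M.submatrix j.succAbove id).det *
              (Matrix.of (Fin.cons (M j) (fun r => N r)) :
                Matrix (Fin (m + 1)) (Fin (m + 1)) R).det
            = ∑ k : Fin (m + 1), (-1 : R) ^ (k : ℕ) *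
                ((Matrix.of (fun r => N r) :
                  Matrix (Fin m) (Fin (m+1)) R).submatrix id k.succAbove).det *
                ((-1 : R) ^ (j : ℕ) * M j k * (M.submatrix j.succAbove id).det) := by
          intro j
          rw [hdet j, Finset.mul_sum]
          apply Finset.sum_congr rfl
          intro k _
          have he : ((Matrix.of (Fin.cons (M j) (fun r => N r)) :
              Matrix (Fin (m + 1)) (Fin (m + 1)) R).submatrix Fin.succ k.succAbove)
              = (Matrix.of (fun r => N r) : Matrix (Fin m) (Fin (m+1)) R).submatrix id k.succAbove := by
            ext i l; simp
          rw [he]; ring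
        simp_rw [step, Finset.mul_sum]
        rw [Finset.sum_comm]
    _ = 0 := by
        apply Finset.sum_eq_zero
        intro k _
        rw [aux_col_expansion R m M k, mul_zero]
end

section
/- Let μ be a positive Borel measure on ℝ with all absolute moments finite and let n ≥ 1. For each partition κ with l(κ) ≤ n put G_κ = ∫_{ℝ^n} Δ(λ)² s_κ(λ_1,…,λ_n) dμ(λ_1)⋯dμ(λ_n). Then for every partition α with l(α) ≤ n+1 and every partition β with l(β) ≤ n−1: Σ_{j=0}^{n} sgn⁺(α, a_{−j}) · sgn⁻(β, a_{−j}) · G_{α − a_{−j}} · G_{β + a_{−j}} = 0, where a_{−j} = α_j − j + 1 and a summand is taken to be 0 whenever β + a_{−j} is not well defined. (This system of Plücker relations for the coefficients G_κ is the content of the paper's main theorem that the partition function of the random matrix model with external source, expanded in Schur functions, is a KP τ-function.) -/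
open MeasureTheory

/-- `G_κ = ∫_{ℝⁿ} Δ(λ)² s_κ(λ) dμⁿ(λ)`, for a given family `s` of Schur polynomials. -/
noncomputable def schurAverage (μ : Measure ℝ) (n : ℕ)
    (s : (ℕ → ℕ) → (Fin n → ℝ) → ℝ) (κ : ℕ → ℕ) : ℝ :=
  ∫ lam : Fin n → ℝ, (vandermondeProd lam) ^ 2 * s κ lam
    ∂(Measure.pi fun _ : Fin n => μ)

open Classical in
/-- The summand `sgn⁻(β, i) · G_{β+i}`, taken to be `0` when `β + i` is not well
defined.  When `β + i` is well defined there is a (unique) insertion position `m`, the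
sign is `sgn⁻(β, i) = (-1)^m`, and the value is `(-1)^m · G (addParts β i m)`. -/
noncomputable def addTerm (β : ℕ → ℕ) (i : ℤ) (G : (ℕ → ℕ) → ℝ) : ℝ :=
  if h : ∃ m : ℕ, (∀ j : ℕ, j < m → (β j : ℤ) - j - 1 > i) ∧
      (∀ j : ℕ, m ≤ j → i > (β j : ℤ) - j - 1)
  then (-1 : ℝ) ^ h.choose * G (addParts β i h.choose)
  else 0

section PluckerAux

open Matrix

/-- The basic linear-algebra Plücker relation. -/
lemma pluckerLA {N : ℕ} (u : Fin (N+2) → Fin (N+1) → ℝ)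
    (W : Matrix (Fin (N+1)) (Fin (N+1)) ℝ) :
    ∑ k : Fin (N+2), (-1:ℝ)^(k:ℕ) *
      (Matrix.of fun i j : Fin (N+1) => u (k.succAbove j) i).det *
      (W.updateCol 0 (u k)).det = 0 := by
  have hD : ∀ x : Fin (N+1) → ℝ, (W.updateCol 0 x).det
      = ∑ i : Fin (N+1), (-1:ℝ)^(i:ℕ) * x i * (W.submatrix i.succAbove Fin.succ).det := by
    intro x
    rw [Matrix.det_succ_column_zero]
    refine Finset.sum_congr rfl fun i _ => ?_
    rw [Matrix.updateCol_self]
    have : (W.updateCol 0 x).submatrix i.succAbove Fin.succ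
        = W.submatrix i.succAbove Fin.succ := by
      ext a b
      simp [Matrix.updateCol_apply, Fin.succ_ne_zero b]
    rw [this]
  have hinner : ∀ i : Fin (N+1),
      ∑ k : Fin (N+2), (-1:ℝ)^(k:ℕ) * u k i *
        (Matrix.of fun r j : Fin (N+1) => u (k.succAbove j) r).det = 0 := by
    intro i
    set B : Matrix (Fin (N+2)) (Fin (N+2)) ℝ :=
      Matrix.of fun r k => Fin.cases (u k i) (fun r' => u k r') r with hB
    have hdet : B.det = ∑ k : Fin (N+2), (-1:ℝ)^(k:ℕ) * u k i *
        (Matrix.of fun r j : Fin (N+1) => u (k.succAbove j) r).det := by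
      rw [Matrix.det_succ_row_zero]
      refine Finset.sum_congr rfl fun k _ => ?_
      have h1 : B 0 k = u k i := rfl
      have h2 : B.submatrix Fin.succ k.succAbove
          = Matrix.of fun r j : Fin (N+1) => u (k.succAbove j) r := by
        ext a b
        simp [hB]
      rw [h1, h2]
    have hzero : B.det = 0 := by
      refine Matrix.det_zero_of_row_eq (i := 0) (j := i.succ) (Fin.succ_ne_zero i).symm ?_
      funext k
      simp [hB]
    rw [← hdet, hzero]
  calc ∑ k : Fin (N+2), (-1:ℝ)^(k:ℕ) *
      (Matrix.of fun i j : Fin (N+1) => u (k.succAbove j) i).det *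
      (W.updateCol 0 (u k)).det
      = ∑ i : Fin (N+1), ((-1:ℝ)^(i:ℕ) * (W.submatrix i.succAbove Fin.succ).det) *
          (∑ k : Fin (N+2), (-1:ℝ)^(k:ℕ) * u k i *
            (Matrix.of fun r j : Fin (N+1) => u (k.succAbove j) r).det) := by
        simp_rw [hD, Finset.mul_sum]
        rw [Finset.sum_comm]
        refine Finset.sum_congr rfl fun i _ => Finset.sum_congr rfl fun k _ => ?_
        ring
    _ = 0 := by
        simp_rw [hinner, mul_zero, Finset.sum_const_zero]

variable {μ : Measure ℝ}

lemma powIntAux (hmom : ∀ m : ℕ, Integrable (fun x : ℝ => |x| ^ m) μ) (m : ℕ) :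
    Integrable (fun x : ℝ => x ^ m) μ := by
  refine (hmom m).mono' ?_ (Filter.Eventually.of_forall fun x => ?_)
  · exact (measurable_id.pow_const m).aestronglyMeasurable
  · simp [abs_pow]

lemma finiteAux (hmom : ∀ m : ℕ, Integrable (fun x : ℝ => |x| ^ m) μ) :
    IsFiniteMeasure μ := by
  have h0 := hmom 0
  simp only [pow_zero] at h0
  rcases (integrable_const_iff (c := (1:ℝ))).mp h0 with h | h
  · norm_num at h
  · exact h

lemma prodIntAux (hmom : ∀ m : ℕ, Integrable (fun x : ℝ => |x| ^ m) μ) {n : ℕ}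
    (m : Fin n → ℕ) :
    Integrable (fun lam : Fin n → ℝ => ∏ i, lam i ^ m i) (Measure.pi fun _ => μ) := by
  haveI := finiteAux hmom
  letI : MeasureSpace ℝ := ⟨μ⟩
  have hvol : (Measure.pi fun _ : Fin n => μ) = (volume : Measure (Fin n → ℝ)) :=
    (MeasureTheory.volume_pi).symm
  rw [hvol]
  exact Integrable.fintype_prod (f := fun i (x : ℝ) => x ^ m i)
    (fun i => powIntAux hmom (m i))

lemma prodIntegralAux (hmom : ∀ m : ℕ, Integrable (fun x : ℝ => |x| ^ m) μ) {n : ℕ}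
    (m : Fin n → ℕ) :
    ∫ lam : Fin n → ℝ, ∏ i, lam i ^ m i ∂(Measure.pi fun _ => μ)
      = ∏ i, ∫ x, x ^ m i ∂μ := by
  haveI := finiteAux hmom
  letI : MeasureSpace ℝ := ⟨μ⟩
  have hvol : (Measure.pi fun _ : Fin n => μ) = (volume : Measure (Fin n → ℝ)) :=
    (MeasureTheory.volume_pi).symm
  rw [hvol]
  exact MeasureTheory.integral_fintype_prod_eq_prod
    (fun i (x : ℝ) => x ^ m i)

/-- The Andréief-type integration identity for monomial determinants. -/
lemma andreiefAux (hmom : ∀ m : ℕ, Integrable (fun x : ℝ => |x| ^ m) μ) {n : ℕ}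
    (e d : Fin n → ℕ) :
    ∫ lam : Fin n → ℝ,
      (Matrix.det (Matrix.of fun i j : Fin n => lam j ^ (e i))) *
      (Matrix.det (Matrix.of fun i j : Fin n => lam j ^ (d i)))
      ∂(Measure.pi fun _ : Fin n => μ)
    = (n.factorial : ℝ) *
        Matrix.det (Matrix.of fun i j : Fin n => ∫ x : ℝ, x ^ (e i + d j) ∂μ) := by
  classical
  set mom : ℕ → ℝ := fun m => ∫ x : ℝ, x ^ m ∂μ with hmomdef
  have hsq : ∀ σ : Equiv.Perm (Fin n),
      ((Equiv.Perm.sign σ : ℤ) : ℝ) * ((Equiv.Perm.sign σ : ℤ) : ℝ) = 1 := by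
    intro σ
    rcases Int.units_eq_one_or (Equiv.Perm.sign σ) with h | h <;> rw [h] <;> norm_num
  have mdet : ∀ (f : Fin n → ℕ) (lam : Fin n → ℝ),
      Matrix.det (Matrix.of fun i j : Fin n => lam j ^ (f i))
        = ∑ σ : Equiv.Perm (Fin n),
            ((Equiv.Perm.sign σ : ℤ) : ℝ) * ∏ i, lam i ^ f (σ i) := by
    intro f lam
    rw [Matrix.det_apply]
    refine Finset.sum_congr rfl fun σ _ => ?_
    simp [Units.smul_def, zsmul_eq_mul]
  have hint : ∀ (σ τ : Equiv.Perm (Fin n)), Integrable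
      (fun lam : Fin n → ℝ =>
        ((Equiv.Perm.sign σ : ℤ) : ℝ) * ((Equiv.Perm.sign τ : ℤ) : ℝ) *
          ∏ i, lam i ^ (e (σ i) + d (τ i))) (Measure.pi fun _ : Fin n => μ) :=
    fun σ τ => (prodIntAux hmom _).const_mul _
  have step1 : ∫ lam : Fin n → ℝ,
      (Matrix.det (Matrix.of fun i j : Fin n => lam j ^ (e i))) *
      (Matrix.det (Matrix.of fun i j : Fin n => lam j ^ (d i)))
      ∂(Measure.pi fun _ : Fin n => μ)
      = ∑ σ : Equiv.Perm (Fin n), ∑ τ : Equiv.Perm (Fin n),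
          ((Equiv.Perm.sign σ : ℤ) : ℝ) * ((Equiv.Perm.sign τ : ℤ) : ℝ) *
            ∏ i, mom (e (σ i) + d (τ i)) := by
    have hpt : ∀ lam : Fin n → ℝ,
        (Matrix.det (Matrix.of fun i j : Fin n => lam j ^ (e i))) *
        (Matrix.det (Matrix.of fun i j : Fin n => lam j ^ (d i)))
        = ∑ σ : Equiv.Perm (Fin n), ∑ τ : Equiv.Perm (Fin n),
            ((Equiv.Perm.sign σ : ℤ) : ℝ) * ((Equiv.Perm.sign τ : ℤ) : ℝ) *
              ∏ i, lam i ^ (e (σ i) + d (τ i)) := by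
      intro lam
      rw [mdet e lam, mdet d lam, Finset.sum_mul_sum]
      refine Finset.sum_congr rfl fun σ _ => Finset.sum_congr rfl fun τ _ => ?_
      rw [show ∏ i, lam i ^ (e (σ i) + d (τ i))
            = (∏ i, lam i ^ e (σ i)) * ∏ i, lam i ^ d (τ i) by
        rw [← Finset.prod_mul_distrib]
        exact Finset.prod_congr rfl fun i _ => pow_add _ _ _]
      ring
    simp_rw [hpt]
    rw [integral_finset_sum _ (fun σ _ => integrable_finset_sum _ (fun τ _ => hint σ τ))]
    refine Finset.sum_congr rfl fun σ _ => ?_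
    rw [integral_finset_sum _ (fun τ _ => hint σ τ)]
    refine Finset.sum_congr rfl fun τ _ => ?_
    rw [MeasureTheory.integral_const_mul, prodIntegralAux hmom]
  rw [step1]
  have hτ : ∀ σ : Equiv.Perm (Fin n),
      (∑ τ : Equiv.Perm (Fin n),
        ((Equiv.Perm.sign σ : ℤ) : ℝ) * ((Equiv.Perm.sign τ : ℤ) : ℝ) *
          ∏ i, mom (e (σ i) + d (τ i)))
      = ∑ ρ : Equiv.Perm (Fin n),
          ((Equiv.Perm.sign ρ : ℤ) : ℝ) * ∏ i, mom (e i + d (ρ i)) := by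
    intro σ
    rw [← Fintype.sum_equiv (Equiv.mulRight σ)
      (fun ρ => ((Equiv.Perm.sign ρ : ℤ) : ℝ) * ∏ i, mom (e i + d (ρ i)))
      (fun τ => ((Equiv.Perm.sign σ : ℤ) : ℝ) * ((Equiv.Perm.sign τ : ℤ) : ℝ) *
          ∏ i, mom (e (σ i) + d (τ i))) ?_]
    intro ρ
    have h1 : ∏ i, mom (e (σ i) + d ((ρ * σ) i)) = ∏ i, mom (e i + d (ρ i)) := by
      have := Equiv.prod_comp σ (fun t => mom (e t + d (ρ t)))
      simpa using this
    have h2 : ((Equiv.Perm.sign σ : ℤ) : ℝ) * ((Equiv.Perm.sign (ρ * σ) : ℤ) : ℝ)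
        = ((Equiv.Perm.sign ρ : ℤ) : ℝ) := by
      rw [Equiv.Perm.sign_mul]
      push_cast
      rw [mul_comm ((Equiv.Perm.sign ρ : ℤ) : ℝ)]
      rw [← mul_assoc, hsq, one_mul]
    refine Eq.symm ?_
    show ((Equiv.Perm.sign σ : ℤ) : ℝ) * ((Equiv.Perm.sign (ρ * σ) : ℤ) : ℝ) *
          ∏ i, mom (e (σ i) + d ((ρ * σ) i))
        = ((Equiv.Perm.sign ρ : ℤ) : ℝ) * ∏ i, mom (e i + d (ρ i))
    rw [h1, h2]
  simp_rw [hτ]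
  rw [Finset.sum_const, Finset.card_univ, Fintype.card_perm, Fintype.card_fin]
  rw [nsmul_eq_mul]
  congr 1
  have : (Matrix.of fun i j : Fin n => mom (e i + d j))
      = (Matrix.of fun i j : Fin n => mom (e j + d i)).transpose := by
    ext i j; rfl
  rw [this, Matrix.det_transpose, Matrix.det_apply']
  refine Finset.sum_congr rfl fun ρ _ => ?_
  congr 1

/-- The sign-adjusted factorial constant. -/
noncomputable def plC (n : ℕ) : ℝ :=
  (∏ i : Fin n, ∏ j ∈ Finset.Ioi i, (-1:ℝ)) * (n.factorial : ℝ)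

lemma vdmEqAux {n : ℕ} (lam : Fin n → ℝ) :
    vandermondeProd lam = (∏ i : Fin n, ∏ j ∈ Finset.Ioi i, (-1:ℝ)) *
      Matrix.det (Matrix.of fun i j : Fin n => lam j ^ (i:ℕ)) := by
  have h1 : (Matrix.of fun i j : Fin n => lam j ^ (i:ℕ)) = (Matrix.vandermonde lam)ᵀ := by
    ext i j; rfl
  rw [h1, Matrix.det_transpose, Matrix.det_vandermonde, ← Finset.prod_mul_distrib]
  unfold vandermondeProd
  refine Finset.prod_congr rfl fun i _ => ?_
  rw [← Finset.prod_mul_distrib]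
  refine Finset.prod_congr rfl fun j _ => by ring

/-- `G_κ` as a moment determinant (up to the constant `plC n`). -/
lemma schurAverageEqAux (μ : Measure ℝ)
    (hmom : ∀ m : ℕ, Integrable (fun x : ℝ => |x| ^ m) μ) (n : ℕ)
    (s : (ℕ → ℕ) → (Fin n → ℝ) → ℝ)
    (hs : ∀ (κ : ℕ → ℕ) (lam : Fin n → ℝ),
      vandermondeProd lam * s κ lam
        = Matrix.det (Matrix.of fun i j : Fin n => lam j ^ (n - 1 - (i : ℕ) + κ i)))
    (κ : ℕ → ℕ) :
    schurAverage μ n s κ = plC n *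
      Matrix.det (Matrix.of fun i j : Fin n =>
        ∫ x : ℝ, x ^ ((i:ℕ) + (n - 1 - (j:ℕ) + κ j)) ∂μ) := by
  unfold schurAverage
  have hpt : ∀ lam : Fin n → ℝ, (vandermondeProd lam) ^ 2 * s κ lam
      = (∏ i : Fin n, ∏ j ∈ Finset.Ioi i, (-1:ℝ)) *
        ((Matrix.det (Matrix.of fun i j : Fin n => lam j ^ ((i:ℕ)))) *
         (Matrix.det (Matrix.of fun i j : Fin n => lam j ^ (n - 1 - (i : ℕ) + κ i)))) := by
    intro lam
    rw [pow_two, mul_assoc, hs κ lam]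
    rw [vdmEqAux lam]
    ring
  simp_rw [hpt]
  rw [MeasureTheory.integral_const_mul]
  rw [andreiefAux hmom (fun i : Fin n => (i:ℕ)) (fun i : Fin n => n - 1 - (i:ℕ) + κ i)]
  unfold plC
  ring
end PluckerAux

/-- **Plücker relations for the Schur coefficients of the partition function.**
Let `μ` be a positive Borel measure on `ℝ` with all absolute moments finite, `n ≥ 1`,
and `s_κ` the Schur polynomials characterized by the bialternant formula.  Put
`G_κ = ∫_{ℝⁿ} Δ(λ)² s_κ(λ) dμⁿ(λ)`.  Then for all partitions `α`, `β` with
`l(α) ≤ n+1` and `l(β) ≤ n-1`: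
`Σ_{j=0}^{n} sgn⁺(α, a_{-j}) · sgn⁻(β, a_{-j}) · G_{α-a_{-j}} · G_{β+a_{-j}} = 0`,
where `a_{-j} = α_j - j + 1`, `sgn⁺(α, a_{-j}) = (-1)^j`, and a summand is `0` whenever
`β + a_{-j}` is not well defined. -/
theorem plucker_relations_schur_coefficients
    (μ : Measure ℝ)
    (hmom : ∀ m : ℕ, Integrable (fun x : ℝ => |x| ^ m) μ)
    (n : ℕ) (hn : 1 ≤ n)
    (s : (ℕ → ℕ) → (Fin n → ℝ) → ℝ)
    (hs : ∀ (κ : ℕ → ℕ) (lam : Fin n → ℝ),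
      vandermondeProd lam * s κ lam
        = Matrix.det (Matrix.of fun i j : Fin n => lam j ^ (n - 1 - (i : ℕ) + κ i)))
    (α β : ℕ → ℕ)
    (hα : Antitone α) (hα0 : ∃ N, ∀ j, N ≤ j → α j = 0)
    (hβ : Antitone β) (hβ0 : ∃ N, ∀ j, N ≤ j → β j = 0)
    (hlα : plen α ≤ n + 1) (hlβ : plen β ≤ n - 1) :
    ∑ j ∈ Finset.range (n + 1),
        (-1 : ℝ) ^ j * schurAverage μ n s (subParts α j) *
          addTerm β ((α j : ℤ) - j + 1) (schurAverage μ n s)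
      = 0 := by
  classical
  obtain ⟨N, rfl⟩ : ∃ N, n = N + 1 := ⟨n - 1, by omega⟩
  have hβzero : ∀ j, N ≤ j → β j = 0 := by
    intro j hj
    have hne : {t : ℕ | β t = 0}.Nonempty := by
      obtain ⟨M, hM⟩ := hβ0; exact ⟨M, hM M le_rfl⟩
    have h1 : β (plen β) = 0 := Nat.sInf_mem hne
    have h2 : plen β ≤ j := le_trans (by simpa using hlβ) hj
    have := hβ h2
    omega
  set u : Fin (N+2) → Fin (N+1) → ℝ :=
    fun k i => ∫ x : ℝ, x ^ ((i:ℕ) + (α k + (N + 1 - (k:ℕ)))) ∂μ with hu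
  set W : Matrix (Fin (N+1)) (Fin (N+1)) ℝ := Matrix.of fun i t =>
    if (t:ℕ) = 0 then 0
    else ∫ x : ℝ, x ^ ((i:ℕ) + (β ((t:ℕ) - 1) + (N - (t:ℕ)))) ∂μ with hW
  -- Claim A : the subParts averages
  have claimA : ∀ k : Fin (N+2), schurAverage μ (N+1) s (subParts α k)
      = plC (N+1) * (Matrix.of fun i j : Fin (N+1) => u (k.succAbove j) i).det := by
    intro k
    rw [schurAverageEqAux μ hmom (N+1) s hs (subParts α k)]
    congr 1
    refine congrArg Matrix.det ?_
    ext i j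
    have hjN : (j:ℕ) ≤ N := by omega
    simp only [Matrix.of_apply, hu]
    by_cases h : (j:ℕ) < (k:ℕ)
    · have hsa : k.succAbove j = j.castSucc :=
        Fin.succAbove_of_castSucc_lt k j (by rw [Fin.lt_def]; simpa using h)
      rw [hsa]
      rw [show subParts α (↑k) (↑j) = α ↑j + 1 from if_pos h]
      refine congrArg (fun E : ℕ => ∫ x : ℝ, x ^ E ∂μ) ?_
      simp only [Fin.coe_castSucc]
      omega
    · have hsa : k.succAbove j = j.succ :=
        Fin.succAbove_of_le_castSucc k j (by rw [Fin.le_def]; simpa using Nat.le_of_not_lt h)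
      rw [hsa]
      rw [show subParts α (↑k) (↑j) = α ((j:ℕ) + 1) from if_neg h]
      refine congrArg (fun E : ℕ => ∫ x : ℝ, x ^ E ∂μ) ?_
      simp only [Fin.val_succ]
      omega
  -- Claim B : the addTerm values
  have claimB : ∀ k : Fin (N+2),
      addTerm β ((α (k:ℕ) : ℤ) - (k:ℕ) + 1) (schurAverage μ (N+1) s)
      = plC (N+1) * (W.updateCol 0 (u k)).det := by
    intro k
    have hk1 : (k:ℕ) ≤ N + 1 := by omega
    set i : ℤ := (α (k:ℕ) : ℤ) - (k:ℕ) + 1 with hi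
    have hiN : -(N:ℤ) ≤ i := by
      have : (0:ℤ) ≤ (α (k:ℕ) : ℤ) := Int.ofNat_nonneg _
      omega
    by_cases h : ∃ m : ℕ, (∀ j : ℕ, j < m → (β j : ℤ) - j - 1 > i) ∧
        (∀ j : ℕ, m ≤ j → i > (β j : ℤ) - j - 1)
    · rw [addTerm, dif_pos h]
      set m := h.choose with hm
      have hm1 : ∀ j : ℕ, j < m → (β j : ℤ) - j - 1 > i := h.choose_spec.1
      have hm2 : ∀ j : ℕ, m ≤ j → i > (β j : ℤ) - j - 1 := h.choose_spec.2
      have hmN : m ≤ N := by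
        by_contra hc
        push_neg at hc
        have h1 := hm1 N hc
        have h2 := hβzero N le_rfl
        rw [h2] at h1
        omega
      have hβpos : ∀ j, j < m → 1 ≤ β j := by
        intro j hj
        by_contra hb
        push_neg at hb
        have hbj : β j = 0 := by omega
        have h1 := hm1 j hj
        rw [hbj] at h1
        have h2 := hm2 m le_rfl
        have hβm : (0:ℤ) ≤ (β m : ℤ) := Int.ofNat_nonneg _
        set t : ℕ := (-i).toNat with ht
        have hti : (t:ℤ) = -i := Int.toNat_of_nonneg (by omega)
        have hjt : j + 2 ≤ t := by omega
        have htm : t ≤ m := by omega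
        have h3 := hm1 (t-1) (by omega)
        have hβt : β (t-1) = 0 := by
          have := hβ (show j ≤ t - 1 by omega)
          omega
        rw [hβt] at h3
        omega
      rw [schurAverageEqAux μ hmom (N+1) s hs (addParts β i m)]
      have hmat : (Matrix.of fun a j : Fin (N+1) =>
            ∫ x : ℝ, x ^ ((a:ℕ) + (N + 1 - 1 - (j:ℕ) + addParts β i m j)) ∂μ)
          = (W.updateCol 0 (u k)).submatrix id
              (Fin.cycleRange (⟨m, by omega⟩ : Fin (N+1))) := by
      -- entries
        ext a b
        rw [Matrix.submatrix_apply, id]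
        rw [Matrix.of_apply]
        rcases lt_trichotomy (b:ℕ) m with hb | hb | hb
        · set c := Fin.cycleRange (⟨m, by omega⟩ : Fin (N+1)) b with hcdef
          have hbN : (b:ℕ) < N := by omega
          have hcval : (c:ℕ) = (b:ℕ) + 1 := by
            rw [hcdef, Fin.cycleRange_of_lt (by rw [Fin.lt_def]; exact hb)]
            exact Fin.val_add_one_of_lt (by rw [Fin.lt_def]; exact lt_of_lt_of_le hbN (by simp [Fin.last]))
          have hcne : c ≠ 0 := Fin.ne_of_val_ne (by rw [hcval, Fin.val_zero]; omega)
          rw [Matrix.updateCol_ne hcne]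
          simp only [hW, Matrix.of_apply]
          rw [if_neg (by omega)]
          rw [show addParts β i m (b:ℕ) = β (b:ℕ) - 1 from if_pos hb]
          have hb1 := hβpos (b:ℕ) hb
          rw [hcval]
          refine congrArg (fun E : ℕ => ∫ x : ℝ, x ^ E ∂μ) ?_
          simp only [Nat.add_sub_cancel]
          omega
        · have hbm : b = (⟨m, by omega⟩ : Fin (N+1)) := Fin.ext hb
          have hcr : Fin.cycleRange (⟨m, by omega⟩ : Fin (N+1)) b = 0 := by
            simp only [hbm, Fin.cycleRange_self]
          rw [hcr, Matrix.updateCol_self]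
          simp only [hu]
          have h2 := hm2 m le_rfl
          have hβm : (0:ℤ) ≤ (β m : ℤ) := Int.ofNat_nonneg _
          rw [show addParts β i m (b:ℕ) = (i + m).toNat by
            unfold addParts
            rw [if_neg (by omega), if_pos hb]]
          have hitn : (((i + m).toNat : ℕ) : ℤ) = i + m := Int.toNat_of_nonneg (by omega)
          refine congrArg (fun E : ℕ => ∫ x : ℝ, x ^ E ∂μ) ?_
          omega
        · have hcr : Fin.cycleRange (⟨m, by omega⟩ : Fin (N+1)) b = b :=
            Fin.cycleRange_of_gt (by rw [Fin.lt_def]; exact hb)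
          have hne : b ≠ 0 := Fin.ne_of_val_ne (by rw [Fin.val_zero]; omega)
          rw [hcr, Matrix.updateCol_ne hne]
          simp only [hW, Matrix.of_apply]
          rw [if_neg (by omega)]
          have hsp : addParts β i m (b:ℕ) = β ((b:ℕ) - 1) := by
            unfold addParts
            rw [if_neg (by omega), if_neg (by omega)]
          rw [hsp]
          refine congrArg (fun E : ℕ => ∫ x : ℝ, x ^ E ∂μ) ?_
          omega
      rw [hmat, Matrix.det_permute']
      have hsgn : ((Equiv.Perm.sign
          (Fin.cycleRange (⟨m, by omega⟩ : Fin (N+1))) : ℤ) : ℝ) = (-1:ℝ)^m := by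
        rw [Fin.sign_cycleRange]
        push_cast
        norm_num
      rw [hsgn]
      have hone : (-1:ℝ)^m * (-1:ℝ)^m = 1 := by
        rw [← mul_pow]; norm_num
      linear_combination (plC (N+1) * ((W.updateCol 0 (u k)).det)) * hone
    · rw [addTerm, dif_neg h]
      have hSne : ∃ j : ℕ, (β j : ℤ) - j - 1 < i := by
        refine ⟨N, ?_⟩
        rw [hβzero N le_rfl]
        push_cast
        omega
      have hl : ∃ l, (β l : ℤ) - l - 1 = i := by
        by_contra hc
        push_neg at hc
        apply h
        refine ⟨Nat.find hSne, fun j hj => ?_, fun j hj => ?_⟩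
        · have h1 := Nat.find_min hSne hj
          have h2 := hc j
          omega
        · have h1 := Nat.find_spec hSne
          have h2 : β j ≤ β (Nat.find hSne) := hβ hj
          omega
      obtain ⟨l, hbl⟩ := hl
      have hlN : l + 1 ≤ N := by
        by_contra hc
        push_neg at hc
        have : β l = 0 := hβzero l (by omega)
        rw [this] at hbl
        omega
      have hPz : (W.updateCol 0 (u k)).det = 0 := by
        rw [← Matrix.det_transpose]
        refine Matrix.det_zero_of_row_eq (i := (0 : Fin (N+1)))
          (j := ⟨l+1, by omega⟩) ?_ ?_
        · intro hcon
          have := congrArg Fin.val hcon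
          simp at this
        · funext a
          show (W.updateCol 0 (u k)) a 0 = (W.updateCol 0 (u k)) a ⟨l+1, by omega⟩
          rw [Matrix.updateCol_self, Matrix.updateCol_ne
            (by intro hcon; have := congrArg Fin.val hcon; simp at this)]
          simp only [hW, hu, Matrix.of_apply]
          rw [if_neg (by simp)]
          refine congrArg (fun E : ℕ => ∫ x : ℝ, x ^ E ∂μ) ?_
          simp only [Nat.add_sub_cancel]
          omega
      rw [hPz, mul_zero]
  -- assemble
  have hrange : ∑ j ∈ Finset.range (N + 1 + 1),
        (-1 : ℝ) ^ j * schurAverage μ (N+1) s (subParts α j) *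
          addTerm β ((α j : ℤ) - j + 1) (schurAverage μ (N+1) s)
      = ∑ k : Fin (N+2),
        (-1 : ℝ) ^ (k:ℕ) * schurAverage μ (N+1) s (subParts α (k:ℕ)) *
          addTerm β ((α (k:ℕ) : ℤ) - (k:ℕ) + 1) (schurAverage μ (N+1) s) :=
    (Fin.sum_univ_eq_sum_range _ _).symm
  rw [hrange]
  have : ∀ k : Fin (N+2),
      (-1 : ℝ) ^ (k:ℕ) * schurAverage μ (N+1) s (subParts α (k:ℕ)) *
        addTerm β ((α (k:ℕ) : ℤ) - (k:ℕ) + 1) (schurAverage μ (N+1) s)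
      = (plC (N+1) * plC (N+1)) *
        ((-1:ℝ)^(k:ℕ) *
          (Matrix.of fun i j : Fin (N+1) => u (k.succAbove j) i).det *
          (W.updateCol 0 (u k)).det) := by
    intro k
    rw [claimA k, claimB k]
    ring
  simp_rw [this]
  rw [← Finset.mul_sum, pluckerLA u W, mul_zero]
end
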